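/- Under the hypotheses guaranteeing J₁T₁ = J₂T₂ = J₃T₃ for skew-symmetric operators Tₐ each commuting with Jₐ and anticommuting with J_b for b ≠ a, we have: ‖Tₐ‖ = ‖T_b‖ for all a, b; for a ≠ b the anticommutator TₐT_b + T_bTₐ = 0; and for a ≠ b and every vector X ∈ H, ⟨TₐX, T_bX⟩ = 0. -/
import Mathlib


open Matrix

lemma skew_quadform_zero {n : ℕ} (S : Matrix (Fin n) (Fin n) ℝ)
    (h : Sᵀ = -S) (x : Fin n → ℝ) : x ⬝ᵥ S.mulVec x = 0 := by
  have h1 : x ⬝ᵥ S.mulVec x = S.vecMul x ⬝ᵥ x := Matrix.dotProduct_mulVec x S x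
  have h2 : S.vecMul x = Sᵀ.mulVec x := (Matrix.mulVec_transpose S x).symm
  rw [h2, h] at h1
  have h3 : (-S).mulVec x = -(S.mulVec x) := by simp [Matrix.neg_mulVec]
  rw [h3, neg_dotProduct, dotProduct_comm] at h1
  rw [dotProduct_comm]
  linarith

lemma dot_mulVec_mulVec {n : ℕ} (A B : Matrix (Fin n) (Fin n) ℝ) (x : Fin n → ℝ) :
    A.mulVec x ⬝ᵥ B.mulVec x = x ⬝ᵥ ((Aᵀ * B).mulVec x) := by
  rw [← Matrix.mulVec_mulVec, Matrix.dotProduct_mulVec x Aᵀ,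
    Matrix.vecMul_transpose]

/-- For skew-symmetric torsion operators `Tₐ` with `Tₐ` commuting with `Jₐ`, anticommuting with
`J_b` for `b ≠ a`, and `Tₐ = -JₐJ_b T_b` for `a ≠ b`: all `Tₐ` have equal Frobenius norm,
`TₐT_b + T_bTₐ = 0` for `a ≠ b`, and `⟨TₐX, T_bX⟩ = 0` for every vector `X` when `a ≠ b`. -/
theorem torsion_orthogonality {n : ℕ}
    (J T : Fin 3 → Matrix (Fin n) (Fin n) ℝ)
    (hskewJ : ∀ a, (J a)ᵀ = -(J a))
    (hsq : ∀ a, J a * J a = -1)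
    (hantiJ : ∀ a b, a ≠ b → J a * J b = -(J b * J a))
    (h123 : J 0 * J 1 * J 2 = -1)
    (hskewT : ∀ a, (T a)ᵀ = -(T a))
    (hcomm : ∀ a, J a * T a = T a * J a)
    (hacomm : ∀ a b, b ≠ a → J b * T a = -(T a * J b))
    (hrel : ∀ a b, a ≠ b → T a = -(J a * J b * T b)) :
    (∀ a b, Real.sqrt (Matrix.trace ((T a)ᵀ * T a)) =
        Real.sqrt (Matrix.trace ((T b)ᵀ * T b))) ∧
    (∀ a b, a ≠ b → T a * T b + T b * T a = 0) ∧
    (∀ a b, a ≠ b → ∀ X : Fin n → ℝ,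
        (T a).mulVec X ⬝ᵥ (T b).mulVec X = 0) := by
  -- anticommutator
  have hanti : ∀ a b, a ≠ b → T a * T b + T b * T a = 0 := by
    intro a b hab
    have h1 : T b * J a = -(J a * T b) := by
      have := hacomm b a hab
      rw [this, neg_neg]
    have hM : T b * (J a * J b) = -(J a * J b * T b) := by
      calc T b * (J a * J b) = (T b * J a) * J b := by rw [mul_assoc]
        _ = -(J a * (T b * J b)) := by rw [h1, neg_mul, mul_assoc]
        _ = -(J a * (J b * T b)) := by rw [hcomm b]
        _ = -(J a * J b * T b) := by rw [mul_assoc]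
    rw [hrel a b hab]
    have e1 : -(J a * J b * T b) * T b = -(J a * J b * T b * T b) := by
      rw [neg_mul]
    have e2 : T b * -(J a * J b * T b) = J a * J b * T b * T b := by
      rw [mul_neg, ← mul_assoc, hM, neg_mul, neg_neg]
    rw [e1, e2, neg_add_cancel]
  refine ⟨?_, hanti, ?_⟩
  · intro a b
    rcases eq_or_ne a b with h | h
    · rw [h]
    · have key : (T a)ᵀ * T a = (T b)ᵀ * T b := by
        rw [hrel a b h]
        simp only [transpose_neg, transpose_mul, hskewJ, neg_mul, mul_neg, neg_neg,
          mul_assoc]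
        rw [← mul_assoc (J a), hsq, neg_one_mul, mul_neg, ← mul_assoc (J b), hsq,
          neg_one_mul, neg_neg]
      rw [key]
  · intro a b hab X
    rw [dot_mulVec_mulVec]
    apply skew_quadform_zero
    have hba : T b * T a = -(T a * T b) :=
      (neg_eq_of_add_eq_zero_right (hanti a b hab)).symm
    rw [transpose_mul, transpose_transpose, hskewT, hskewT]
    simp [hba, Matrix.neg_mul, Matrix.mul_neg]
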